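/- Let X ⊆ ℝ (with the subspace topology). The following are equivalent: (1) X satisfies Sfin(B_Γ,B_Τ): for every sequence (𝒰_n) of countable Borel γ-covers of X there exist finite subsets 𝓕_n ⊆ 𝒰_n such that ⋃_n 𝓕_n is a τ-cover of X; (2) for every Borel measurable function Ψ : X → {0,1}^{ℕ×ℕ} (where {0,1}^{ℕ×ℕ} carries the product topology), if the image Ψ[X] is a γ-family, then Ψ[X] is finitely τ-diagonalizable. -/

import Mathlib

open Filter Set

/-- `f ≤* g`: `f n ≤ g n` for all but finitely many `n`. -/
def LeStar (f g : ℕ → ℕ) : Prop := ∀ᶠ n in Filter.atTop, f n ≤ g n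

/-- A subset of Baire space is bounded if it has a `≤*`-upper bound. -/
def BddFam (B : Set (ℕ → ℕ)) : Prop := ∃ g : ℕ → ℕ, ∀ f ∈ B, LeStar f g

/-- A subset of Baire space is dominating if every function is `≤*` below some member. -/
def DominatingFam (D : Set (ℕ → ℕ)) : Prop := ∀ g : ℕ → ℕ, ∃ f ∈ D, LeStar g f

/-- An open cover of a topological space. -/
def IsOpenCover {X : Type*} [TopologicalSpace X] (𝒰 : Set (Set X)) : Prop :=
  (∀ U ∈ 𝒰, IsOpen U) ∧ ⋃₀ 𝒰 = Set.univ

/-- The cover `𝒰` contains a finite subcover. -/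
def HasFinSubcover {X : Type*} (𝒰 : Set (Set X)) : Prop :=
  ∃ ℱ ⊆ 𝒰, ℱ.Finite ∧ ⋃₀ ℱ = Set.univ

/-- The Hurewicz property `Ufin(O,Γ)`. -/
def UfinOGamma (X : Type*) [TopologicalSpace X] : Prop :=
  ∀ 𝒰 : ℕ → Set (Set X),
    (∀ n, IsOpenCover (𝒰 n)) → (∀ n, ¬ HasFinSubcover (𝒰 n)) →
    ∃ ℱ : ℕ → Set (Set X),
      (∀ n, ℱ n ⊆ 𝒰 n ∧ (ℱ n).Finite) ∧
      ∀ x : X, ∀ᶠ n in Filter.atTop, x ∈ ⋃₀ ℱ n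

/-- A large cover: every point belongs to infinitely many members. -/
def IsLargeCover {X : Type*} (𝒰 : Set (Set X)) : Prop :=
  ⋃₀ 𝒰 = Set.univ ∧ ∀ x : X, {U ∈ 𝒰 | x ∈ U}.Infinite

/-- A `τ`-cover: a large cover such that for all points `x, y`, one of the sets of members
separating `x` from `y` (or `y` from `x`) is finite. -/
def IsTauCover {X : Type*} (𝒰 : Set (Set X)) : Prop :=
  IsLargeCover 𝒰 ∧ ∀ x y : X,
    {U ∈ 𝒰 | x ∈ U ∧ y ∉ U}.Finite ∨ {U ∈ 𝒰 | y ∈ U ∧ x ∉ U}.Finite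

/-- A `γ`-array: `A : {0,1}^{ℕ×ℕ}` with `(∀ n)(∀^∞ m) A(n,m) = 1`. -/
def GammaArray (A : ℕ × ℕ → Bool) : Prop :=
  ∀ n : ℕ, ∀ᶠ m in Filter.atTop, A (n, m) = true

/-- A `γ`-family: a family of `γ`-arrays. -/
def GammaFamily (𝒜 : Set (ℕ × ℕ → Bool)) : Prop := ∀ A ∈ 𝒜, GammaArray A

/-- A family `𝒜 ⊆ {0,1}^{ℕ×ℕ}` is finitely `τ`-diagonalizable if there are finite sets
`F n ⊆ ℕ` such that (a) each `A ∈ 𝒜` has `(∃^∞ n)(∃ m ∈ F n) A(n,m) = 1`, and (b) any two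
members of `𝒜` are comparable on the `F n`'s, eventually in `n`. -/
def FinitelyTauDiagonalizable (𝒜 : Set (ℕ × ℕ → Bool)) : Prop :=
  ∃ F : ℕ → Finset ℕ,
    (∀ A ∈ 𝒜, ∃ᶠ n in Filter.atTop, ∃ m ∈ F n, A (n, m) = true) ∧
    ∀ A ∈ 𝒜, ∀ B ∈ 𝒜,
      (∀ᶠ n in Filter.atTop, ∀ m ∈ F n, A (n, m) ≤ B (n, m)) ∨
      (∀ᶠ n in Filter.atTop, ∀ m ∈ F n, B (n, m) ≤ A (n, m))

/-- A countable Borel `γ`-cover: a countably infinite family of Borel sets covering the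
space, with every point in all but finitely many members. -/
def CtblBorelGammaCover {X : Type*} [TopologicalSpace X] (𝒰 : Set (Set X)) : Prop :=
  𝒰.Countable ∧ 𝒰.Infinite ∧ (∀ U ∈ 𝒰, @MeasurableSet X (borel X) U) ∧
    ⋃₀ 𝒰 = Set.univ ∧ ∀ x : X, {U ∈ 𝒰 | x ∉ U}.Finite

/-- The property `Sfin(B_Γ,B_Τ)`. -/
def SfinBGammaBTau (X : Type*) [TopologicalSpace X] : Prop :=
  ∀ 𝒰 : ℕ → Set (Set X), (∀ n, CtblBorelGammaCover (𝒰 n)) →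
    ∃ ℱ : ℕ → Set (Set X), (∀ n, ℱ n ⊆ 𝒰 n ∧ (ℱ n).Finite) ∧
      IsTauCover (⋃ n, ℱ n)

def GammaFamily' (𝒜 : Set (ℕ × ℕ → Bool)) : Prop := ∀ A ∈ 𝒜, ∀ n : ℕ, ∀ᶠ m in Filter.atTop, A (n, m) = true

def FTD (𝒜 : Set (ℕ × ℕ → Bool)) : Prop :=
  ∃ F : ℕ → Finset ℕ,
    (∀ A ∈ 𝒜, ∃ᶠ n in Filter.atTop, ∃ m ∈ F n, A (n, m) = true) ∧
    ∀ A ∈ 𝒜, ∀ B ∈ 𝒜,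
      (∀ᶠ n in Filter.atTop, ∀ m ∈ F n, A (n, m) ≤ B (n, m)) ∨
      (∀ᶠ n in Filter.atTop, ∀ m ∈ F n, B (n, m) ≤ A (n, m))

def CBGC {X : Type*} [TopologicalSpace X] (𝒰 : Set (Set X)) : Prop :=
  𝒰.Countable ∧ 𝒰.Infinite ∧ (∀ U ∈ 𝒰, @MeasurableSet X (borel X) U) ∧
    ⋃₀ 𝒰 = Set.univ ∧ ∀ x : X, {U ∈ 𝒰 | x ∉ U}.Finite

lemma exists_enum' {α : Type*} {s : Set α} (hc : s.Countable) (hi : s.Infinite) :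
    ∃ f : ℕ → α, Function.Injective f ∧ Set.range f = s := by
  haveI := hc.to_subtype
  haveI := hi.to_subtype
  letI : Encodable s := Encodable.ofCountable _
  letI : Denumerable s := Denumerable.ofEncodableOfInfinite _
  refine ⟨fun n => ((Denumerable.eqv s).symm n : α), ?_, ?_⟩
  · exact fun a b h => (Denumerable.eqv s).symm.injective (Subtype.val_injective h)
  · rw [show (fun n => ((Denumerable.eqv s).symm n : α)) = (Subtype.val ∘ (Denumerable.eqv s).symm)
      from rfl, Set.range_comp, Equiv.range_eq_univ, Set.image_univ, Subtype.range_coe]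

lemma measurable_decide_mem' {T : Type*} {m : MeasurableSpace T} {U : Set T}
    [∀ x, Decidable (x ∈ U)] (hU : MeasurableSet U) :
    Measurable fun x => decide (x ∈ U) := by
  have h : (fun x => decide (x ∈ U)) = fun x => if x ∈ U then true else false := by
    funext x; by_cases hx : x ∈ U <;> simp [hx]
  rw [h]
  exact Measurable.ite hU measurable_const measurable_const

lemma tau_of_gamma_subfamily' {T : Type*} {𝒱 : Set (Set T)} (hinf : 𝒱.Infinite)
    (hγ : ∀ x : T, {U ∈ 𝒱 | x ∉ U}.Finite) :
    (⋃₀ 𝒱 = Set.univ ∧ ∀ x : T, {U ∈ 𝒱 | x ∈ U}.Infinite) ∧ ∀ x y : T,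
      {U ∈ 𝒱 | x ∈ U ∧ y ∉ U}.Finite ∨ {U ∈ 𝒱 | y ∈ U ∧ x ∉ U}.Finite := by
  have hlarge : ∀ x : T, {U ∈ 𝒱 | x ∈ U}.Infinite := by
    intro x
    apply (hinf.diff (hγ x)).mono
    rintro U ⟨hU1, hU2⟩
    refine ⟨hU1, ?_⟩
    by_contra hx
    exact hU2 ⟨hU1, hx⟩
  refine ⟨⟨?_, hlarge⟩, ?_⟩
  · ext x
    simp only [mem_univ, iff_true, mem_sUnion]
    obtain ⟨U, hU1, hU2⟩ := (hlarge x).nonempty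
    exact ⟨U, hU1, hU2⟩
  · intro x y
    left
    apply (hγ y).subset
    rintro U ⟨h1, _, h2⟩
    exact ⟨h1, h2⟩

theorem main_mp {T : Type*} [TopologicalSpace T]
    (hS : ∀ 𝒰 : ℕ → Set (Set T), (∀ n, CBGC (𝒰 n)) →
      ∃ ℱ : ℕ → Set (Set T), (∀ n, ℱ n ⊆ 𝒰 n ∧ (ℱ n).Finite) ∧
        ((⋃₀ (⋃ n, ℱ n) = Set.univ ∧ ∀ x : T, {U ∈ ⋃ n, ℱ n | x ∈ U}.Infinite) ∧ ∀ x y : T,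
          {U ∈ ⋃ n, ℱ n | x ∈ U ∧ y ∉ U}.Finite ∨ {U ∈ ⋃ n, ℱ n | y ∈ U ∧ x ∉ U}.Finite)) :
    ∀ Ψ : T → (ℕ × ℕ → Bool),
        @Measurable T (ℕ × ℕ → Bool) (borel T) (borel (ℕ × ℕ → Bool)) Ψ →
        GammaFamily' (Set.range Ψ) → FTD (Set.range Ψ) := by
  classical
  intro Ψ hmeas hγ
  set U : ℕ → ℕ → Set T := fun r m => Ψ ⁻¹' {A | A (r, m) = true} with hUdef
  have hUmem : ∀ (x : T) r m, x ∈ U r m ↔ Ψ x (r, m) = true := fun x r m => Iff.rfl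
  have hUborel : ∀ r m, @MeasurableSet T (borel T) (U r m) := by
    intro r m
    apply hmeas
    letI : MeasurableSpace (ℕ × ℕ → Bool) := borel (ℕ × ℕ → Bool)
    haveI : BorelSpace (ℕ × ℕ → Bool) := ⟨rfl⟩
    have hopen : IsOpen {A : ℕ × ℕ → Bool | A (r, m) = true} := by
      have : {A : ℕ × ℕ → Bool | A (r, m) = true} =
          (fun A : ℕ × ℕ → Bool => A (r, m)) ⁻¹' {true} := rfl
      rw [this]
      exact (continuous_apply (r, m)).isOpen_preimage _ (isOpen_discrete _)
    exact hopen.measurableSet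
  have hrow : ∀ (x : T) r, {m | ¬ Ψ x (r, m) = true}.Finite := by
    intro x r
    have h := hγ (Ψ x) ⟨x, rfl⟩ r
    rwa [← Nat.cofinite_eq_atTop, eventually_cofinite] at h
  set R : Set ℕ := {r | (Set.range (U r)).Infinite} with hRdef
  have hdeg : ∀ r ∉ R, ∃ M, ∀ x : T, Ψ x (r, M) = true := by
    intro r hr
    have hfinr : (Set.range (U r)).Finite := Set.not_infinite.1 hr
    have hfib : ∃ S ∈ Set.range (U r), {m | U r m = S}.Infinite := by
      by_contra hcon
      push_neg at hcon
      have huniv : (Set.univ : Set ℕ).Finite := by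
        have hsub : (Set.univ : Set ℕ) ⊆ ⋃ S ∈ Set.range (U r), {m | U r m = S} :=
          fun m _ => Set.mem_biUnion (Set.mem_range_self m) rfl
        exact (hfinr.biUnion fun S hS => hcon S hS).subset hsub
      exact Set.infinite_univ huniv
    obtain ⟨S, -, hSinf⟩ := hfib
    obtain ⟨M, hM⟩ := hSinf.nonempty
    refine ⟨M, fun x => ?_⟩
    obtain ⟨m, hm⟩ := (hSinf.diff (hrow x r)).nonempty
    have hm1 : U r m = S := hm.1
    have hm2 : Ψ x (r, m) = true := not_not.1 hm.2
    have hxS : x ∈ S := by rw [← hm1]; exact (hUmem x r m).2 hm2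
    have hxM : x ∈ U r M := by rw [hM]; exact hxS
    exact (hUmem x r M).1 hxM
  have hMex : ∀ r, ∃ M, r ∈ R ∨ ∀ x : T, Ψ x (r, M) = true := by
    intro r
    by_cases h : r ∈ R
    · exact ⟨0, Or.inl h⟩
    · exact ⟨(hdeg r h).choose, Or.inr (hdeg r h).choose_spec⟩
  choose M hM using hMex
  have hMdeg : ∀ r, r ∉ R → ∀ x : T, Ψ x (r, M r) = true := fun r hr => (hM r).resolve_left hr
  by_cases hRinf : R.Infinite
  · -- R infinite: use Sfin on the covers given by rows in R
    obtain ⟨ρ, hρinj, hρran⟩ := exists_enum' (Set.to_countable R) hRinf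
    have hρR : ∀ j, ρ j ∈ R := fun j => by rw [← hρran]; exact Set.mem_range_self j
    have hι : ∀ r ∈ R, ∃ j, ρ j = r := fun r hr => by rwa [← hρran] at hr
    set 𝒞 : ℕ → Set (Set T) := fun j => Set.range (U (ρ j)) with h𝒞
    have h𝒞cov : ∀ j, CBGC (𝒞 j) := by
      intro j
      refine ⟨Set.countable_range _, hρR j, ?_, ?_, ?_⟩
      · rintro V ⟨m, rfl⟩
        exact hUborel _ _
      · ext x
        simp only [mem_univ, iff_true, mem_sUnion]
        obtain ⟨m, hm⟩ := (hγ (Ψ x) ⟨x, rfl⟩ (ρ j)).exists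
        exact ⟨U (ρ j) m, Set.mem_range_self m, (hUmem x (ρ j) m).2 hm⟩
      · intro x
        apply ((hrow x (ρ j)).image (U (ρ j))).subset
        rintro V ⟨⟨m, rfl⟩, hxV⟩
        exact ⟨m, hxV, rfl⟩
    obtain ⟨ℱ, hℱ, hτ⟩ := hS 𝒞 h𝒞cov
    have hVdec : ∀ V ∈ ⋃ n, ℱ n, ∃ j m, V ∈ ℱ j ∧ U (ρ j) m = V := by
      intro V hV
      obtain ⟨j, hj⟩ := Set.mem_iUnion.1 hV
      obtain ⟨m, hm⟩ := (hℱ j).1 hj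
      exact ⟨j, m, hj, hm⟩
    choose! jf mf hjf hmf using hVdec
    set G : ℕ → Set ℕ := fun j => mf '' {V ∈ ⋃ n, ℱ n | jf V = j} with hG
    have hGfin : ∀ j, (G j).Finite := by
      intro j
      apply Set.Finite.image
      apply Set.Finite.subset (hℱ j).2
      rintro V ⟨hV, hjV⟩
      rw [← hjV]
      exact hjf V hV
    set F : ℕ → Finset ℕ := fun r =>
      if h : r ∈ R then (hGfin (hι r h).choose).toFinset else {M r} with hF
    have hFR : ∀ j, F (ρ j) = (hGfin j).toFinset := by
      intro j
      have h : ρ j ∈ R := hρR j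
      have hch : (hι (ρ j) h).choose = j := hρinj (hι (ρ j) h).choose_spec
      simp only [hF]
      rw [dif_pos h, hch]
    refine ⟨F, ?_, ?_⟩
    · rintro A ⟨x, rfl⟩
      rw [Nat.frequently_atTop_iff_infinite]
      have hP : {V ∈ ⋃ n, ℱ n | x ∈ V}.Infinite := hτ.1.2 x
      have hJ : (jf '' {V ∈ ⋃ n, ℱ n | x ∈ V}).Infinite := by
        intro hfinJ
        apply hP
        refine Set.Finite.subset (Set.Finite.biUnion hfinJ (fun j _ => (hℱ j).2)) ?_
        rintro V ⟨hV, hxV⟩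
        exact Set.mem_biUnion (Set.mem_image_of_mem jf ⟨hV, hxV⟩) (hjf V hV)
      refine ((hJ.image (Set.injOn_of_injective hρinj)).mono ?_)
      rintro r ⟨j, ⟨V, ⟨hV𝒱, hxV⟩, hjV⟩, rfl⟩
      refine ⟨mf V, ?_, ?_⟩
      · rw [hFR j, Set.Finite.mem_toFinset]
        exact ⟨V, ⟨hV𝒱, hjV⟩, rfl⟩
      · have h2 := hmf V hV𝒱
        rw [hjV] at h2
        have hx2 : x ∈ U (ρ j) (mf V) := by rw [h2]; exact hxV
        exact (hUmem x (ρ j) (mf V)).1 hx2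
    · have main : ∀ x y : T, {V ∈ ⋃ n, ℱ n | x ∈ V ∧ y ∉ V}.Finite →
          ∀ᶠ r in atTop, ∀ m ∈ F r, Ψ x (r, m) ≤ Ψ y (r, m) := by
        intro x y hSfin
        have hBfin : ((fun V => ρ (jf V)) '' {V ∈ ⋃ n, ℱ n | x ∈ V ∧ y ∉ V}).Finite :=
          hSfin.image _
        rw [← Nat.cofinite_eq_atTop, eventually_cofinite]
        apply hBfin.subset
        intro r hr
        simp only [mem_setOf_eq] at hr
        push_neg at hr
        obtain ⟨m, hm, hnle⟩ := hr
        have hxt : Ψ x (r, m) = true := (Bool.lt_iff.1 hnle).2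
        have hyf : Ψ y (r, m) = false := (Bool.lt_iff.1 hnle).1
        by_cases hrR : r ∈ R
        · obtain ⟨j, rfl⟩ := hι r hrR
          rw [hFR j, Set.Finite.mem_toFinset] at hm
          obtain ⟨V, ⟨hV𝒱, hjV⟩, hmV⟩ := hm
          have hVU : U (ρ j) (mf V) = V := by
            have h2 := hmf V hV𝒱
            rwa [hjV] at h2
          have hxV : x ∈ V := by
            rw [← hVU, hmV]
            exact (hUmem x (ρ j) m).2 hxt
          have hyV : y ∉ V := by
            rw [← hVU, hmV]
            intro hy
            have := (hUmem y (ρ j) m).1 hy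
            rw [hyf] at this
            exact Bool.false_ne_true this
          exact ⟨V, ⟨hV𝒱, hxV, hyV⟩, show ρ (jf V) = ρ j by rw [hjV]⟩
        · have hmm : m = M r := by
            have : m ∈ ({M r} : Finset ℕ) := by
              rw [hF] at hm
              simpa [dif_neg hrR] using hm
            simpa using this
          rw [hmm, hMdeg r hrR y] at hyf
          exact absurd hyf (by decide)
      rintro A ⟨x, rfl⟩ B ⟨y, rfl⟩
      rcases hτ.2 x y with h | h
      · exact Or.inl (main x y h)
      · exact Or.inr (main y x h)
  · -- R finite: almost all rows are degenerate
    have hRc : Rᶜ.Infinite := Set.Finite.infinite_compl (Set.not_infinite.1 hRinf)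
    refine ⟨fun r => if r ∈ R then ∅ else {M r}, ?_, ?_⟩
    · rintro A ⟨x, rfl⟩
      rw [Nat.frequently_atTop_iff_infinite]
      apply hRc.mono
      intro r hr
      refine ⟨M r, ?_, hMdeg r hr x⟩
      simp [if_neg hr]
    · rintro A ⟨x, rfl⟩ B ⟨y, rfl⟩
      left
      apply Filter.Eventually.of_forall
      intro r m hm
      by_cases hr : r ∈ R
      · simp [if_pos hr] at hm
      · simp only [if_neg hr, Finset.mem_singleton] at hm
        subst hm
        rw [hMdeg r hr x, hMdeg r hr y]


theorem main_mpr {T : Type*} [TopologicalSpace T]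
    (H : ∀ Ψ : T → (ℕ × ℕ → Bool),
        @Measurable T (ℕ × ℕ → Bool) (borel T) (borel (ℕ × ℕ → Bool)) Ψ →
        GammaFamily' (Set.range Ψ) → FTD (Set.range Ψ)) :
    ∀ 𝒰 : ℕ → Set (Set T), (∀ n, CBGC (𝒰 n)) →
      ∃ ℱ : ℕ → Set (Set T), (∀ n, ℱ n ⊆ 𝒰 n ∧ (ℱ n).Finite) ∧
        ((⋃₀ (⋃ n, ℱ n) = Set.univ ∧ ∀ x : T, {U ∈ ⋃ n, ℱ n | x ∈ U}.Infinite) ∧ ∀ x y : T,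
          {U ∈ ⋃ n, ℱ n | x ∈ U ∧ y ∉ U}.Finite ∨ {U ∈ ⋃ n, ℱ n | y ∈ U ∧ x ∉ U}.Finite) := by
  classical
  intro 𝒰 hU
  by_cases hA : ∀ K : Finset ℕ, ∃ n, (𝒰 n \ ⋃ j ∈ K, 𝒰 j).Infinite
  · -- Case A: infinitely many "fresh" covers; use the hypothesis H
    choose c hc using hA
    set acc : ℕ → Finset ℕ := fun k => Nat.rec ∅ (fun _ K => insert (c K) K) k with hacc
    set i : ℕ → ℕ := fun k => c (acc k) with hi
    have hacc_succ : ∀ k, acc (k + 1) = insert (i k) (acc k) := fun k => rfl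
    have hacc_mono : ∀ {j k : ℕ}, j ≤ k → acc j ⊆ acc k := by
      intro j k h
      induction h with
      | refl => exact Finset.Subset.refl _
      | step _ ih => exact ih.trans (by rw [hacc_succ]; exact Finset.subset_insert _ _)
    have hmem : ∀ {j k : ℕ}, j < k → i j ∈ acc k := by
      intro j k hjk
      have h1 : i j ∈ acc (j + 1) := by rw [hacc_succ]; exact Finset.mem_insert_self _ _
      exact hacc_mono hjk h1
    set W : ℕ → Set (Set T) := fun k => 𝒰 (i k) \ ⋃ j ∈ acc k, 𝒰 j with hW
    have hWinf : ∀ k, (W k).Infinite := fun k => hc (acc k)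
    have hWsub : ∀ k, W k ⊆ 𝒰 (i k) := fun k => diff_subset
    have hWdisj : ∀ {j k : ℕ} {V : Set T}, V ∈ W j → V ∈ W k → j = k := by
      have key : ∀ {j k : ℕ} {V : Set T}, j < k → V ∈ W j → V ∈ W k → False := by
        intro j k V hjk hVj hVk
        exact hVk.2 (Set.mem_biUnion (hmem hjk) (hWsub j hVj))
      intro j k V h1 h2
      rcases lt_trichotomy j k with h | h | h
      · exact absurd (key h h1 h2) (fun h => h)
      · exact h
      · exact absurd (key h h2 h1) (fun h => h)
    have hiinj : Function.Injective i := by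
      intro j k hjk
      by_contra hne
      rcases Ne.lt_or_gt hne with h | h
      · obtain ⟨V, hV⟩ := (hWinf k).nonempty
        exact hV.2 (Set.mem_biUnion (hmem h) (by rw [hjk]; exact hWsub k hV))
      · obtain ⟨V, hV⟩ := (hWinf j).nonempty
        exact hV.2 (Set.mem_biUnion (hmem h) (by rw [← hjk]; exact hWsub j hV))
    have henum : ∀ k, ∃ e : ℕ → Set T, Function.Injective e ∧ Set.range e = W k :=
      fun k => exists_enum' ((hU (i k)).1.mono (hWsub k)) (hWinf k)
    choose e heinj herange using henum
    have heW : ∀ k m, e k m ∈ W k := fun k m => by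
      rw [← herange k]; exact Set.mem_range_self m
    set Ψ : T → (ℕ × ℕ → Bool) := fun x p => decide (x ∈ e p.1 p.2) with hΨ
    have hmeas : @Measurable T (ℕ × ℕ → Bool) (borel T) (borel (ℕ × ℕ → Bool)) Ψ := by
      have hb : borel (ℕ × ℕ → Bool) = (inferInstance : MeasurableSpace (ℕ × ℕ → Bool)) :=
        BorelSpace.measurable_eq.symm
      rw [hb]
      letI : MeasurableSpace T := borel T
      refine measurable_pi_iff.2 fun p => ?_
      exact measurable_decide_mem' ((hU (i p.1)).2.2.1 _ (hWsub p.1 (heW p.1 p.2)))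
    have hγfam : GammaFamily' (Set.range Ψ) := by
      rintro A ⟨x, rfl⟩ n
      rw [← Nat.cofinite_eq_atTop, eventually_cofinite]
      have hfin := (hU (i n)).2.2.2.2 x
      have hsub : {m | ¬ Ψ x (n, m) = true} ⊆ (e n) ⁻¹' {V ∈ 𝒰 (i n) | x ∉ V} := by
        intro m hm
        simp only [hΨ, mem_setOf_eq, decide_eq_true_eq] at hm
        exact ⟨hWsub n (heW n m), hm⟩
      exact (hfin.preimage (Set.injOn_of_injective (heinj n))).subset hsub
    obtain ⟨F, ha, hb2⟩ := H Ψ hmeas hγfam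
    set ℱ : ℕ → Set (Set T) := fun n =>
      if h : ∃ k, i k = n then e h.choose '' ↑(F h.choose) else ∅ with hℱ
    have hkey : ∀ k, ℱ (i k) = e k '' ↑(F k) := by
      intro k
      have h : ∃ k', i k' = i k := ⟨k, rfl⟩
      have hch : h.choose = k := hiinj h.choose_spec
      simp only [hℱ]
      rw [dif_pos h, hch]
    have hℱprop : ∀ n, ℱ n ⊆ 𝒰 n ∧ (ℱ n).Finite := by
      intro n
      by_cases h : ∃ k, i k = n
      · constructor
        · simp only [hℱ]
          rw [dif_pos h]
          rintro V ⟨m, _, rfl⟩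
          have h2 := hWsub _ (heW h.choose m)
          rwa [h.choose_spec] at h2
        · simp only [hℱ]
          rw [dif_pos h]
          exact ((F h.choose).finite_toSet).image _
      · simp only [hℱ]
        rw [dif_neg h]
        exact ⟨empty_subset _, finite_empty⟩
    refine ⟨ℱ, hℱprop, ?_⟩
    have hmem𝒱 : ∀ V, V ∈ ⋃ n, ℱ n ↔ ∃ k, ∃ m ∈ F k, e k m = V := by
      intro V
      constructor
      · intro hV
        obtain ⟨n, hn⟩ := Set.mem_iUnion.1 hV
        by_cases h : ∃ k, i k = n
        · simp only [hℱ] at hn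
          rw [dif_pos h] at hn
          obtain ⟨m, hm, hVe⟩ := hn
          exact ⟨h.choose, m, hm, hVe⟩
        · simp only [hℱ] at hn
          rw [dif_neg h] at hn
          exact absurd hn (Set.notMem_empty V)
      · rintro ⟨k, m, hm, rfl⟩
        exact Set.mem_iUnion.2 ⟨i k, by rw [hkey k]; exact Set.mem_image_of_mem _ hm⟩
    have hlarge : ∀ x : T, {V ∈ ⋃ n, ℱ n | x ∈ V}.Infinite := by
      intro x
      have hfreq := ha (Ψ x) ⟨x, rfl⟩
      rw [Nat.frequently_atTop_iff_infinite] at hfreq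
      haveI := hfreq.to_subtype
      choose mw hmw1 hmw2 using fun (k : {n | ∃ m ∈ F n, Ψ x (n, m) = true}) => k.2
      refine Set.infinite_of_injective_forall_mem
        (f := fun k : {n | ∃ m ∈ F n, Ψ x (n, m) = true} => e k.1 (mw k)) ?_ ?_
      · intro k k' hkk'
        have hkk2 : e k.1 (mw k) = e k'.1 (mw k') := hkk'
        have h1 : e k.1 (mw k) ∈ W k.1 := heW _ _
        have h2 : e k.1 (mw k) ∈ W k'.1 := by rw [hkk2]; exact heW _ _
        exact Subtype.ext (hWdisj h1 h2)
      · intro k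
        refine ⟨(hmem𝒱 _).2 ⟨k.1, mw k, hmw1 k, rfl⟩, ?_⟩
        have h2 := hmw2 k
        simpa [hΨ] using h2
    have hcomp : ∀ x y : T,
        (∀ᶠ n in atTop, ∀ m ∈ F n, Ψ x (n, m) ≤ Ψ y (n, m)) →
        {V ∈ ⋃ n, ℱ n | x ∈ V ∧ y ∉ V}.Finite := by
      intro x y hcase
      obtain ⟨K₀, hK₀⟩ := eventually_atTop.1 hcase
      refine Set.Finite.subset
        (Set.Finite.biUnion (Finset.range K₀).finite_toSet
          (fun k _ => ((F k).finite_toSet).image (e k))) ?_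
      rintro V ⟨hV, hxV, hyV⟩
      obtain ⟨k, m, hm, rfl⟩ := (hmem𝒱 V).1 hV
      have hk : k < K₀ := by
        by_contra hk
        push_neg at hk
        have hle := hK₀ k hk m hm
        have hxt : Ψ x (k, m) = true := by simp [hΨ, hxV]
        rw [hxt] at hle
        have hyt : Ψ y (k, m) = true := by
          cases hy : Ψ y (k, m)
          · rw [hy] at hle; exact absurd hle (by decide)
          · rfl
        exact hyV (by simpa [hΨ] using hyt)
      exact Set.mem_biUnion (Finset.mem_coe.2 (Finset.mem_range.2 hk)) (Set.mem_image_of_mem _ hm)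
    refine ⟨⟨?_, hlarge⟩, ?_⟩
    · ext x
      simp only [mem_univ, iff_true, mem_sUnion]
      obtain ⟨V, hV1, hV2⟩ := (hlarge x).nonempty
      exact ⟨V, hV1, hV2⟩
    · intro x y
      rcases hb2 (Ψ x) ⟨x, rfl⟩ (Ψ y) ⟨y, rfl⟩ with h | h
      · exact Or.inl (hcomp x y h)
      · exact Or.inr (hcomp y x h)
  · -- Case B: all covers almost contained in finitely many; pick chunks in one cover
    push_neg at hA
    obtain ⟨K, hK⟩ := hA
    have hfin : ∀ n, (𝒰 n \ ⋃ j ∈ K, 𝒰 j).Finite := fun n => hK n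
    have hex : ∀ n, ∃ k ∈ K, (𝒰 n ∩ 𝒰 k).Infinite := by
      intro n
      by_contra hcon
      push_neg at hcon
      have h1 : (𝒰 n).Finite := by
        have hsub : 𝒰 n ⊆ (𝒰 n \ ⋃ j ∈ K, 𝒰 j) ∪ ⋃ k ∈ K, (𝒰 n ∩ 𝒰 k) := by
          intro V hV
          by_cases h : V ∈ ⋃ j ∈ K, 𝒰 j
          · right
            obtain ⟨k, hk, hVk⟩ := Set.mem_iUnion₂.1 h
            exact Set.mem_iUnion₂.2 ⟨k, hk, hV, hVk⟩
          · exact Or.inl ⟨hV, h⟩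
        exact ((hfin n).union (Set.Finite.biUnion K.finite_toSet
          (fun k hk => hcon k hk))).subset hsub
      exact (hU n).2.1 h1
    choose κ hκK hκinf using hex
    have hpk : ∃ k ∈ K, {n | κ n = k}.Infinite := by
      by_contra hcon
      push_neg at hcon
      have huniv : (Set.univ : Set ℕ).Finite := by
        have hsub : (Set.univ : Set ℕ) ⊆ ⋃ k ∈ K, {n | κ n = k} := fun n _ =>
          Set.mem_iUnion₂.2 ⟨κ n, hκK n, rfl⟩
        exact (Set.Finite.biUnion K.finite_toSet
          (fun k hk => hcon k hk)).subset hsub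
      exact Set.infinite_univ huniv
    obtain ⟨k, -, hNk⟩ := hpk
    have sel : ∀ n, ∃ s : Set (Set T), s ⊆ 𝒰 n ∩ 𝒰 k ∧ s.Finite ∧
        ((𝒰 n ∩ 𝒰 k).Infinite → ∃ t : Finset (Set T), s = ↑t ∧ t.card = n + 1) := by
      intro n
      by_cases h : (𝒰 n ∩ 𝒰 k).Infinite
      · obtain ⟨t, hts, htc⟩ := h.exists_subset_card_eq (n + 1)
        exact ⟨↑t, hts, t.finite_toSet, fun _ => ⟨t, rfl, htc⟩⟩
      · exact ⟨∅, empty_subset _, finite_empty, fun h' => absurd h' h⟩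
    choose ℱ hsub hfin' hcard using sel
    refine ⟨ℱ, fun n => ⟨(hsub n).trans Set.inter_subset_left, hfin' n⟩, ?_⟩
    have hγ' : ∀ x : T, {U ∈ ⋃ n, ℱ n | x ∉ U}.Finite := by
      intro x
      apply ((hU k).2.2.2.2 x).subset
      rintro V ⟨hV1, hV2⟩
      obtain ⟨n, hn⟩ := Set.mem_iUnion.1 hV1
      exact ⟨(hsub n hn).2, hV2⟩
    have hinf : (⋃ n, ℱ n).Infinite := by
      by_contra hfin2
      rw [Set.not_infinite] at hfin2
      obtain ⟨n, hn, hnc⟩ := hNk.exists_gt hfin2.toFinset.card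
      have hninf : (𝒰 n ∩ 𝒰 k).Infinite := by
        have h2 := hκinf n
        rwa [hn] at h2
      obtain ⟨t, hts, htc⟩ := hcard n hninf
      have hsubt : t ⊆ hfin2.toFinset := by
        intro V hV
        rw [Set.Finite.mem_toFinset]
        exact Set.mem_iUnion.2 ⟨n, by rw [hts]; exact hV⟩
      have hle := Finset.card_le_card hsubt
      rw [htc] at hle
      omega
    exact tau_of_gamma_subfamily' hinf hγ'


/-- Mildenberger–Shelah et al.: a set of reals satisfies `Sfin(B_Γ,B_Τ)` iff every Borel
image of it in `{0,1}^{ℕ×ℕ}` which is a `γ`-family is finitely `τ`-diagonalizable. -/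
theorem sfinBGammaBTau_characterization (X : Set ℝ) :
    SfinBGammaBTau X ↔
      ∀ Ψ : X → (ℕ × ℕ → Bool),
        @Measurable X (ℕ × ℕ → Bool) (borel X) (borel (ℕ × ℕ → Bool)) Ψ →
        GammaFamily (Set.range Ψ) → FinitelyTauDiagonalizable (Set.range Ψ) := by
  constructor
  · intro h
    exact main_mp h
  · intro h
    exact main_mpr h
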